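/- Let G be a connected bipartite simple graph whose vertex set is partitioned into two convex sets X₁ and X₂, and let uv be an edge of G with u ∈ X₁ and v ∈ X₂. Then X₁ = X_{uv} and X₂ = X_{vu}, where X_{uv} is the set of vertices strictly closer to u than to v and X_{vu} is the set of vertices strictly closer to v than to u. -/

import Mathlib

/-- A set `C` of vertices of `G` is convex if it contains every vertex lying on a
shortest path between two of its vertices (expressed via distances). -/
def GraphConvex {V : Type*} (G : SimpleGraph V) (C : Set V) : Prop :=
  ∀ u ∈ C, ∀ w ∈ C, ∀ v : V, G.edist u v + G.edist v w = G.edist u w → v ∈ C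

lemma walk_parity {V : Type*} {G : SimpleGraph V} (c : G.Coloring (ZMod 2)) {a b : V}
    (p : G.Walk a b) : (p.length : ZMod 2) = c b - c a := by
  induction p with
  | nil => simp
  | @cons a x b h p ih =>
    have hne : c a ≠ c x := c.valid h
    have h1 : c a = c x + 1 :=
      (by decide : ∀ y z : ZMod 2, y ≠ z → y = z + 1) _ _ hne
    have h2 : (1 : ZMod 2) = -1 := by decide
    simp only [SimpleGraph.Walk.length_cons, Nat.cast_add, Nat.cast_one, ih, h1]
    linear_combination h2

/-- Corollary 3: if the vertex set of a connected bipartite graph is partitioned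
into two convex sets `X₁`, `X₂` and `uv` is an edge with `u ∈ X₁`, `v ∈ X₂`, then
`X₁ = X_{uv}` and `X₂ = X_{vu}`. -/
theorem stmt_3 {V : Type*} [Fintype V] (G : SimpleGraph V)
    (hconn : G.Connected) (hbip : G.Colorable 2)
    (X₁ X₂ : Set V) (hX₁ : GraphConvex G X₁) (hX₂ : GraphConvex G X₂)
    (hdisj : Disjoint X₁ X₂) (hcover : X₁ ∪ X₂ = (Set.univ : Set V))
    (u v : V) (huv : G.Adj u v) (hu : u ∈ X₁) (hv : v ∈ X₂) :
    X₁ = {x : V | G.edist x u < G.edist x v} ∧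
    X₂ = {x : V | G.edist x v < G.edist x u} := by
  obtain ⟨c⟩ := hbip
  let c' : G.Coloring (ZMod 2) := ⟨fun w => (c w : ZMod 2), fun h => by
    exact c.valid h⟩
  have hcuv : c' u ≠ c' v := c'.valid huv
  have huv1 : G.edist v u = 1 := SimpleGraph.edist_eq_one_iff_adj.mpr huv.symm
  have hvu1 : G.edist u v = 1 := SimpleGraph.edist_eq_one_iff_adj.mpr huv
  have key : ∀ x : V, G.edist x u ≠ G.edist x v := by
    intro x h
    obtain ⟨p, hp⟩ := (hconn x u).exists_walk_length_eq_edist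
    obtain ⟨q, hq⟩ := (hconn x v).exists_walk_length_eq_edist
    have hlen : p.length = q.length := by
      have : (p.length : ℕ∞) = q.length := by rw [hp, hq, h]
      exact_mod_cast this
    have h1 := walk_parity c' p
    have h2 := walk_parity c' q
    rw [hlen, h2] at h1
    exact hcuv (sub_left_inj.mp h1).symm
  have hnetop : ∀ x y : V, G.edist x y ≠ ⊤ :=
    fun x y => SimpleGraph.edist_ne_top_iff_reachable.mpr (hconn x y)
  have main1 : ∀ x ∈ X₁, G.edist x u < G.edist x v := by
    intro x hx
    rcases (key x).lt_or_gt with h | h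
    · exact h
    · exfalso
      have hle : G.edist x u ≤ G.edist x v + 1 := by
        calc G.edist x u ≤ G.edist x v + G.edist v u := SimpleGraph.edist_triangle
        _ = G.edist x v + 1 := by rw [huv1]
      have heq : G.edist x v + 1 = G.edist x u :=
        le_antisymm ((ENat.add_one_le_iff (hnetop x v)).mpr h) hle
      have hvX₁ : v ∈ X₁ := hX₁ x hx u hu v (by rw [huv1]; exact heq)
      exact Set.disjoint_left.mp hdisj hvX₁ hv
  have main2 : ∀ x ∈ X₂, G.edist x v < G.edist x u := by
    intro x hx
    rcases (key x).lt_or_gt with h | h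
    · exfalso
      have hle : G.edist x v ≤ G.edist x u + 1 := by
        calc G.edist x v ≤ G.edist x u + G.edist u v := SimpleGraph.edist_triangle
        _ = G.edist x u + 1 := by rw [hvu1]
      have heq : G.edist x u + 1 = G.edist x v :=
        le_antisymm ((ENat.add_one_le_iff (hnetop x u)).mpr h) hle
      have huX₂ : u ∈ X₂ := hX₂ x hx v hv u (by rw [hvu1]; exact heq)
      exact Set.disjoint_left.mp hdisj hu huX₂
    · exact h
  constructor
  · ext x
    simp only [Set.mem_setOf_eq]
    refine ⟨main1 x, fun h => ?_⟩
    rcases (hcover ▸ Set.mem_univ x : x ∈ X₁ ∪ X₂) with hx | hx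
    · exact hx
    · exact absurd (main2 x hx) (lt_asymm h)
  · ext x
    simp only [Set.mem_setOf_eq]
    refine ⟨main2 x, fun h => ?_⟩
    rcases (hcover ▸ Set.mem_univ x : x ∈ X₁ ∪ X₂) with hx | hx
    · exact absurd (main1 x hx) (lt_asymm h)
    · exact hx
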